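/- Let G be a graph on {1,…,n} with n ≥ 9 such that G − n = P_{n−1} and the neighbourhood of n in G is {k} for some k with 3 ≤ k ≤ n−3. Then G is indecomposable and its indecomposability graph is {1, n−1}-covered (every pair {x,y} of distinct vertices with {x,y} ∩ {1,n−1} = ∅ satisfies that G − {x,y} is decomposable). -/

import Mathlib

open SimpleGraph

variable {V : Type*}

open Fin.NatCast

/-- `I` is an interval (module) of `G`: every vertex outside `I` is adjacent
either to all or to none of the vertices of `I`. -/
def IsInterval (G : SimpleGraph V) (I : Set V) : Prop :=
  ∀ x ∉ I, ∀ a ∈ I, ∀ b ∈ I, (G.Adj a x ↔ G.Adj b x)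

/-- A graph is indecomposable if its only intervals are trivial. -/
def Indecomposable (G : SimpleGraph V) : Prop :=
  ∀ I : Set V, IsInterval G I → I = ∅ ∨ I = Set.univ ∨ ∃ x, I = {x}

def Decomposable (G : SimpleGraph V) : Prop := ¬ Indecomposable G

/-- The path graph on `Fin n`; the vertex `(i : Fin n)` represents the
paper's vertex `i+1`, so edges join consecutive indices. -/
def P (n : ℕ) : SimpleGraph (Fin n) :=
  SimpleGraph.fromRel (fun i j => (i : ℕ) + 1 = (j : ℕ))

/-- The graph `Q_n` on `Fin n` (index `i` represents the paper's vertex `i+1`):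
the path on indices `0..n-3` together with the hub index `n-2` (vertex `n-1`)
joined to every index except `n-2` and `n-3`. -/
def Q (n : ℕ) : SimpleGraph (Fin n) :=
  SimpleGraph.fromRel (fun i j =>
    ((i : ℕ) + 1 = (j : ℕ) ∧ (j : ℕ) ≤ n - 3) ∨
    ((i : ℕ) = n - 2 ∧ (j : ℕ) ≠ n - 2 ∧ (j : ℕ) ≠ n - 3))

/-- `Ext(X)`. -/
def ExtSet (G : SimpleGraph V) (X : Set V) : Set V :=
  {v | v ∉ X ∧ Indecomposable (G.induce (X ∪ {v}))}

/-- `⟨X⟩`. -/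
def AngleSet (G : SimpleGraph V) (X : Set V) : Set V :=
  {v | v ∉ X ∧ ((∀ x ∈ X, G.Adj v x) ∨ (∀ x ∈ X, ¬ G.Adj v x))}

/-- `X(u)`: vertices `v ∉ X` such that `{u,v}` is an interval of `G[X ∪ {v}]`. -/
def XSet (G : SimpleGraph V) (X : Set V) (u : V) : Set V :=
  {v | v ∉ X ∧ IsInterval (G.induce (X ∪ {v})) (Subtype.val ⁻¹' {u, v})}

/-- `G` is `{a,b}`-minimal. -/
def IsMinimal (G : SimpleGraph V) (a b : V) : Prop :=
  Indecomposable G ∧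
    ∀ X : Set V, X ⊂ Set.univ → a ∈ X → b ∈ X → 3 ≤ X.ncard →
      Decomposable (G.induce X)


lemma decomp_of_closed {W : Type*} (H : SimpleGraph W) (S : Set W)
    (hclosed : ∀ a ∈ S, ∀ b, H.Adj a b → b ∈ S)
    (hedge : ∃ a ∈ S, ∃ b, H.Adj a b)
    (hcompl : ∃ c, c ∉ S) : Decomposable H := by
  intro hind
  have hSI : IsInterval H S := by
    intro x hx a ha b hb
    exact iff_of_false (fun h => hx (hclosed a ha x h)) (fun h => hx (hclosed b hb x h))
  rcases hind S hSI with h | h | ⟨z, h⟩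
  · obtain ⟨a, ha, _⟩ := hedge; rw [h] at ha; exact ha
  · obtain ⟨c, hc⟩ := hcompl; rw [h] at hc; exact hc (Set.mem_univ c)
  · obtain ⟨a, ha, b, hab⟩ := hedge
    have hb : b ∈ S := hclosed a ha b hab
    rw [h, Set.mem_singleton_iff] at ha hb
    rw [ha, hb] at hab; exact H.loopless.irrefl _ hab

theorem Pminus1_single_neighbour (n k : ℕ) (hn : 9 ≤ n) (hk1 : 3 ≤ k) (hk2 : k ≤ n - 3)
    (G : SimpleGraph (Fin n))
    (hpath : ∀ i j : Fin n, (i : ℕ) < n - 1 → (j : ℕ) < n - 1 →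
      (G.Adj i j ↔ ((i : ℕ) + 1 = (j : ℕ) ∨ (j : ℕ) + 1 = (i : ℕ))))
    (hN : ∀ j : Fin n, G.Adj ⟨n - 1, by omega⟩ j ↔ (j : ℕ) + 1 = k) :
    Indecomposable G ∧
    ∀ x y : Fin n, x ≠ y → (x : ℕ) ≠ 0 → (x : ℕ) ≠ n - 2 →
      (y : ℕ) ≠ 0 → (y : ℕ) ≠ n - 2 →
      Decomposable (G.induce (({x, y} : Set (Fin n))ᶜ)) := by
  haveI : NeZero n := ⟨by omega⟩
  have hvc : ∀ m : ℕ, m < n → ((m : Fin n) : ℕ) = m := fun m hm => Fin.val_cast_of_lt hm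
  set vlast : Fin n := ⟨n - 1, by omega⟩ with hvlastdef
  have hN' : ∀ j : Fin n, G.Adj vlast j ↔ (j : ℕ) + 1 = k := hN
  have hvl : (vlast : ℕ) = n - 1 := rfl
  have hadj : ∀ i j : Fin n, G.Adj i j ↔
      (((i:ℕ) < n-1 ∧ (j:ℕ) < n-1 ∧ ((i:ℕ)+1 = (j:ℕ) ∨ (j:ℕ)+1 = (i:ℕ))) ∨
       ((i:ℕ) = n-1 ∧ (j:ℕ)+1 = k) ∨
       ((j:ℕ) = n-1 ∧ (i:ℕ)+1 = k)) := by
    intro i j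
    have hil := i.isLt
    have hjl := j.isLt
    rcases Nat.lt_or_ge (i:ℕ) (n-1) with hi | hi
    · rcases Nat.lt_or_ge (j:ℕ) (n-1) with hj | hj
      · rw [hpath i j hi hj]; omega
      · have hje : j = vlast := Fin.ext (by omega)
        subst hje
        rw [G.adj_comm, hN' i]
        omega
    · have hie : i = vlast := Fin.ext (by omega)
      subst hie
      rw [hN' j]
      omega
  have key : ∀ (I : Set (Fin n)), IsInterval G I → ∀ w a b : Fin n, a ∈ I → b ∈ I →
      G.Adj a w → ¬ G.Adj b w → w ∈ I := by
    intro I hI w a b ha hb h1 h2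
    by_contra hw
    have := hI w hw a ha b hb
    tauto
  have indec : Indecomposable G := by
    intro I hI
    by_cases htwo : ∃ p ∈ I, ∃ q ∈ I, p ≠ q
    · right; left
      obtain ⟨p0, hp0, q0, hq0, hpq0⟩ := htwo
      have main : ∀ p q : Fin n, p ∈ I → q ∈ I → (p:ℕ) < (q:ℕ) →
          ∃ i : ℕ, i + 1 ≤ n - 2 ∧ ((i:ℕ) : Fin n) ∈ I ∧ ((i+1 : ℕ) : Fin n) ∈ I := by
        intro p q hp hq hlt
        have hpl := p.isLt
        have hql := q.isLt
        rcases Nat.lt_or_ge (q:ℕ) (n-1) with hq1 | hq1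
        · by_cases hc : (q:ℕ) = (p:ℕ) + 1
          · refine ⟨(p:ℕ), by omega, by rwa [Fin.cast_val_eq_self], ?_⟩
            have he : (((p:ℕ)+1 : ℕ) : Fin n) = q := Fin.ext (by rw [hvc _ (by omega)]; omega)
            rwa [he]
          · by_cases hmid : (((p:ℕ)+1 : ℕ) : Fin n) ∈ I
            · exact ⟨(p:ℕ), by omega, by rwa [Fin.cast_val_eq_self], hmid⟩
            · have hiff := hI _ hmid p hp q hq
              have hap : G.Adj p (((p:ℕ)+1 : ℕ) : Fin n) := by
                rw [hadj, hvc _ (by omega)]; omega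
              have haq := hiff.mp hap
              rw [hadj, hvc _ (by omega)] at haq
              have hq2 : (q:ℕ) = (p:ℕ) + 2 := by omega
              by_cases hpp : 1 ≤ (p:ℕ)
              · have hw : (((p:ℕ)-1 : ℕ) : Fin n) ∈ I := by
                  refine key I hI _ p q hp hq ?_ ?_
                  · rw [hadj, hvc _ (by omega)]; omega
                  · rw [hadj, hvc _ (by omega)]; omega
                refine ⟨(p:ℕ)-1, by omega, hw, ?_⟩
                have he : (((p:ℕ)-1+1 : ℕ) : Fin n) = p := Fin.ext (by rw [hvc _ (by omega)]; omega)
                rwa [he]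
              · have hw : (((q:ℕ)+1 : ℕ) : Fin n) ∈ I := by
                  refine key I hI _ q p hq hp ?_ ?_
                  · rw [hadj, hvc _ (by omega)]; omega
                  · rw [hadj, hvc _ (by omega)]; omega
                exact ⟨(q:ℕ), by omega, by rwa [Fin.cast_val_eq_self], hw⟩
        · have hqval : (q:ℕ) = n-1 := by omega
          by_cases hpk : (p:ℕ) = k-1
          · have hw : ((k:ℕ) : Fin n) ∈ I := by
              refine key I hI _ p q hp hq ?_ ?_
              · rw [hadj, hvc _ (by omega)]; omega
              · rw [hadj, hvc _ (by omega)]; omega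
            refine ⟨k-1, by omega, ?_, ?_⟩
            · have he : ((k-1:ℕ):Fin n) = p := Fin.ext (by rw [hvc _ (by omega)]; omega)
              rwa [he]
            · rw [show k-1+1 = k by omega]; exact hw
          · by_cases hk1 : ((k-1:ℕ):Fin n) ∈ I
            · have hw : ((k:ℕ):Fin n) ∈ I := by
                refine key I hI _ _ q hk1 hq ?_ ?_
                · rw [hadj, hvc _ (by omega), hvc _ (by omega)]; omega
                · rw [hadj, hvc _ (by omega)]; omega
              exact ⟨k-1, by omega, hk1, by rw [show k-1+1 = k by omega]; exact hw⟩
            · have hiff := hI _ hk1 p hp q hq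
              have haq : G.Adj q ((k-1:ℕ):Fin n) := by
                rw [hadj, hvc _ (by omega)]; omega
              have hap := hiff.mpr haq
              rw [hadj, hvc _ (by omega)] at hap
              have hp2 : (p:ℕ) = k-2 ∨ (p:ℕ) = k := by omega
              rcases hp2 with h2 | h2
              · have hw : ((k-3:ℕ):Fin n) ∈ I := by
                  refine key I hI _ p q hp hq ?_ ?_
                  · rw [hadj, hvc _ (by omega)]; omega
                  · rw [hadj, hvc _ (by omega)]; omega
                refine ⟨k-3, by omega, hw, ?_⟩
                rw [show k-3+1 = k-2 by omega]
                have he : ((k-2:ℕ):Fin n) = p := Fin.ext (by rw [hvc _ (by omega)]; omega)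
                rwa [he]
              · have hw : ((k+1:ℕ):Fin n) ∈ I := by
                  refine key I hI _ p q hp hq ?_ ?_
                  · rw [hadj, hvc _ (by omega)]; omega
                  · rw [hadj, hvc _ (by omega)]; omega
                refine ⟨k, by omega, ?_, hw⟩
                have he : ((k:ℕ):Fin n) = p := Fin.ext (by rw [hvc _ (by omega)]; omega)
                rwa [he]
      have pair : ∃ i : ℕ, i + 1 ≤ n - 2 ∧ ((i:ℕ):Fin n) ∈ I ∧ ((i+1:ℕ):Fin n) ∈ I := by
        rcases Nat.lt_or_ge (p0:ℕ) (q0:ℕ) with h | h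
        · exact main p0 q0 hp0 hq0 h
        · have hlt : (q0:ℕ) < (p0:ℕ) := by
            rcases Nat.lt_or_ge (q0:ℕ) (p0:ℕ) with h' | h'
            · exact h'
            · exact absurd (Fin.ext (by omega)) hpq0
          exact main q0 p0 hq0 hp0 hlt
      obtain ⟨i, hile, hi1, hi2⟩ := pair
      have step : ∀ j : ℕ, j + 1 ≤ n - 2 → ((j:ℕ):Fin n) ∈ I → ((j+1:ℕ):Fin n) ∈ I →
          (1 ≤ j → ((j-1:ℕ):Fin n) ∈ I) ∧ (j+2 ≤ n-2 → ((j+2:ℕ):Fin n) ∈ I) := by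
        intro j hj h1 h2
        constructor
        · intro hj1
          refine key I hI _ _ _ h1 h2 ?_ ?_
          · rw [hadj, hvc _ (by omega), hvc _ (by omega)]; omega
          · rw [hadj, hvc _ (by omega), hvc _ (by omega)]; omega
        · intro hj2
          refine key I hI _ _ _ h2 h1 ?_ ?_
          · rw [hadj, hvc _ (by omega), hvc _ (by omega)]; omega
          · rw [hadj, hvc _ (by omega), hvc _ (by omega)]; omega
      have down : ∀ d, d ≤ i → ((i-d:ℕ):Fin n) ∈ I := by
        have H : ∀ d, d ≤ i → ((i-d:ℕ):Fin n) ∈ I ∧ ((i-d+1:ℕ):Fin n) ∈ I := by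
          intro d
          induction d with
          | zero =>
            intro _
            exact ⟨by simpa using hi1, by simpa using hi2⟩
          | succ m ih =>
            intro hm
            obtain ⟨h1, h2⟩ := ih (by omega)
            have hd : ((i-m-1:ℕ):Fin n) ∈ I := (step (i-m) (by omega) h1 h2).1 (by omega)
            constructor
            · rw [show i-(m+1) = i-m-1 by omega]; exact hd
            · rw [show i-(m+1)+1 = i-m by omega]; exact h1
        intro d hd
        exact (H d hd).1
      have up : ∀ d, i+1+d ≤ n-2 → ((i+1+d:ℕ):Fin n) ∈ I := by
        have H : ∀ d, i+1+d ≤ n-2 → ((i+d:ℕ):Fin n) ∈ I ∧ ((i+1+d:ℕ):Fin n) ∈ I := by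
          intro d
          induction d with
          | zero =>
            intro _
            exact ⟨by simpa using hi1, by simpa using hi2⟩
          | succ m ih =>
            intro hm
            obtain ⟨h1, h2⟩ := ih (by omega)
            rw [show i+1+m = i+m+1 by omega] at h2
            have hd : ((i+m+2:ℕ):Fin n) ∈ I := (step (i+m) (by omega) h1 h2).2 (by omega)
            constructor
            · rw [show i+(m+1) = i+m+1 by omega]; exact h2
            · rw [show i+1+(m+1) = i+m+2 by omega]; exact hd
        intro d hd
        exact (H d hd).2
      have allpath : ∀ j : ℕ, j ≤ n-2 → ((j:ℕ):Fin n) ∈ I := by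
        intro j hj
        rcases le_or_gt j i with h | h
        · have := down (i-j) (by omega)
          rwa [show i-(i-j) = j by omega] at this
        · have := up (j-(i+1)) (by omega)
          rwa [show i+1+(j-(i+1)) = j by omega] at this
      have hlast : ((n-1:ℕ):Fin n) ∈ I := by
        refine key I hI _ ((k-1:ℕ):Fin n) ((0:ℕ):Fin n) (allpath (k-1) (by omega))
          (allpath 0 (by omega)) ?_ ?_
        · rw [hadj, hvc _ (by omega), hvc _ (by omega)]; omega
        · rw [hadj, hvc _ (by omega), hvc _ (by omega)]; omega
      ext z
      simp only [Set.mem_univ, iff_true]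
      rcases Nat.lt_or_ge (z:ℕ) (n-1) with hz | hz
      · have := allpath (z:ℕ) (by omega)
        rwa [Fin.cast_val_eq_self] at this
      · have hze : ((n-1:ℕ):Fin n) = z := Fin.ext (by rw [hvc _ (by omega)]; have := z.isLt; omega)
        rwa [hze] at hlast
    · push_neg at htwo
      rcases I.eq_empty_or_nonempty with h | ⟨z, hz⟩
      · left; exact h
      · right; right
        exact ⟨z, Set.eq_singleton_iff_unique_mem.mpr ⟨hz, fun w hw => htwo w hw z hz⟩⟩
  refine ⟨indec, ?_⟩
  have part2 : ∀ x y : Fin n, (x:ℕ) < (y:ℕ) → (x:ℕ) ≠ 0 → (x:ℕ) ≠ n-2 →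
      (y:ℕ) ≠ 0 → (y:ℕ) ≠ n-2 → Decomposable (G.induce (({x,y} : Set (Fin n))ᶜ)) := by
    intro x y hxy hx0 hx2 hy0 hy2
    have hxl := x.isLt
    have hyl := y.isLt
    set R : Set (Fin n) := (({x, y} : Set (Fin n))ᶜ) with hR
    have hmem : ∀ m : ℕ, m < n → m ≠ (x:ℕ) → m ≠ (y:ℕ) → (m : Fin n) ∈ R := by
      intro m hm h1 h2
      rw [hR]
      simp only [Set.mem_compl_iff, Set.mem_insert_iff, Set.mem_singleton_iff]
      push_neg
      constructor
      · intro h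
        apply h1
        have := congrArg Fin.val h
        rwa [hvc m hm] at this
      · intro h
        apply h2
        have := congrArg Fin.val h
        rwa [hvc m hm] at this
    have hmem' : ∀ v : Fin n, v ∈ R → (v:ℕ) ≠ (x:ℕ) ∧ (v:ℕ) ≠ (y:ℕ) := by
      intro v hv
      rw [hR] at hv
      simp only [Set.mem_compl_iff, Set.mem_insert_iff, Set.mem_singleton_iff] at hv
      push_neg at hv
      exact ⟨fun h => hv.1 (Fin.ext h), fun h => hv.2 (Fin.ext h)⟩
    have build : ∀ Pn : ℕ → Prop,
        (∀ u w : Fin n, u ∈ R → w ∈ R → Pn (u:ℕ) → G.Adj u w → Pn (w:ℕ)) →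
        (∃ u w : Fin n, u ∈ R ∧ w ∈ R ∧ Pn (u:ℕ) ∧ G.Adj u w) →
        (∃ c : Fin n, c ∈ R ∧ ¬ Pn (c:ℕ)) →
        Decomposable (G.induce R) := by
      intro Pn hcl hedge hcompl
      obtain ⟨u, w, hu, hw, hpu, huw⟩ := hedge
      obtain ⟨c, hc, hpc⟩ := hcompl
      apply decomp_of_closed _ {v : ↥R | Pn ((v : Fin n) : ℕ)}
      · rintro ⟨a, ha⟩ hpa ⟨b, hb⟩ hab
        exact hcl a b ha hb hpa hab
      · exact ⟨⟨u, hu⟩, hpu, ⟨w, hw⟩, huw⟩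
      · exact ⟨⟨c, hc⟩, hpc⟩
    rcases Nat.lt_or_ge (y:ℕ) (n-1) with hyb | hyb
    · -- both removed vertices are ≤ n-3
      have hy3 : (y:ℕ) ≤ n-3 := by omega
      have hx3 : (x:ℕ) ≤ n-3 := by omega
      by_cases hx1 : 2 ≤ (x:ℕ)
      · apply build (fun m => m < (y:ℕ) ∨ (m = n-1 ∧ k ≤ (y:ℕ)))
        · intro u w hu hw hpu huw
          obtain ⟨hu1, hu2⟩ := hmem' u hu
          obtain ⟨hw1, hw2⟩ := hmem' w hw
          have hul := u.isLt
          have hwl := w.isLt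
          rw [hadj] at huw
          omega
        · refine ⟨((0:ℕ):Fin n), ((1:ℕ):Fin n), hmem 0 (by omega) (by omega) (by omega),
            hmem 1 (by omega) (by omega) (by omega), ?_, ?_⟩
          · rw [hvc _ (by omega)]; omega
          · rw [hadj, hvc _ (by omega), hvc _ (by omega)]; omega
        · refine ⟨((n-2:ℕ):Fin n), hmem (n-2) (by omega) (by omega) (by omega), ?_⟩
          rw [hvc _ (by omega)]; omega
      · have hxe : (x:ℕ) = 1 := by omega
        by_cases hy4 : 4 ≤ (y:ℕ)
        · apply build (fun m => m < (y:ℕ) ∨ (m = n-1 ∧ k ≤ (y:ℕ)))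
          · intro u w hu hw hpu huw
            obtain ⟨hu1, hu2⟩ := hmem' u hu
            obtain ⟨hw1, hw2⟩ := hmem' w hw
            have hul := u.isLt
            have hwl := w.isLt
            rw [hadj] at huw
            omega
          · refine ⟨((2:ℕ):Fin n), ((3:ℕ):Fin n), hmem 2 (by omega) (by omega) (by omega),
              hmem 3 (by omega) (by omega) (by omega), ?_, ?_⟩
            · rw [hvc _ (by omega)]; omega
            · rw [hadj, hvc _ (by omega), hvc _ (by omega)]; omega
          · refine ⟨((n-2:ℕ):Fin n), hmem (n-2) (by omega) (by omega) (by omega), ?_⟩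
            rw [hvc _ (by omega)]; omega
        · apply build (fun m => (y:ℕ) < m ∧ (m = n-1 → (y:ℕ)+2 ≤ k))
          · intro u w hu hw hpu huw
            obtain ⟨hu1, hu2⟩ := hmem' u hu
            obtain ⟨hw1, hw2⟩ := hmem' w hw
            have hul := u.isLt
            have hwl := w.isLt
            rw [hadj] at huw
            omega
          · refine ⟨(((y:ℕ)+1:ℕ):Fin n), (((y:ℕ)+2:ℕ):Fin n),
              hmem ((y:ℕ)+1) (by omega) (by omega) (by omega),
              hmem ((y:ℕ)+2) (by omega) (by omega) (by omega), ?_, ?_⟩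
            · rw [hvc _ (by omega)]; omega
            · rw [hadj, hvc _ (by omega), hvc _ (by omega)]; omega
          · refine ⟨((0:ℕ):Fin n), hmem 0 (by omega) (by omega) (by omega), ?_⟩
            rw [hvc _ (by omega)]; omega
    · have hye : (y:ℕ) = n-1 := by omega
      have hx3 : (x:ℕ) ≤ n-3 := by omega
      by_cases hx1 : 2 ≤ (x:ℕ)
      · apply build (fun m => m < (x:ℕ))
        · intro u w hu hw hpu huw
          obtain ⟨hu1, hu2⟩ := hmem' u hu
          obtain ⟨hw1, hw2⟩ := hmem' w hw
          have hul := u.isLt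
          have hwl := w.isLt
          rw [hadj] at huw
          omega
        · refine ⟨((0:ℕ):Fin n), ((1:ℕ):Fin n), hmem 0 (by omega) (by omega) (by omega),
            hmem 1 (by omega) (by omega) (by omega), ?_, ?_⟩
          · rw [hvc _ (by omega)]; omega
          · rw [hadj, hvc _ (by omega), hvc _ (by omega)]; omega
        · refine ⟨((n-2:ℕ):Fin n), hmem (n-2) (by omega) (by omega) (by omega), ?_⟩
          rw [hvc _ (by omega)]; omega
      · have hxe : (x:ℕ) = 1 := by omega
        apply build (fun m => 1 < m)
        · intro u w hu hw hpu huw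
          obtain ⟨hu1, hu2⟩ := hmem' u hu
          obtain ⟨hw1, hw2⟩ := hmem' w hw
          have hul := u.isLt
          have hwl := w.isLt
          rw [hadj] at huw
          omega
        · refine ⟨((n-3:ℕ):Fin n), ((n-2:ℕ):Fin n), hmem (n-3) (by omega) (by omega) (by omega),
            hmem (n-2) (by omega) (by omega) (by omega), ?_, ?_⟩
          · rw [hvc _ (by omega)]; omega
          · rw [hadj, hvc _ (by omega), hvc _ (by omega)]; omega
        · refine ⟨((0:ℕ):Fin n), hmem 0 (by omega) (by omega) (by omega), ?_⟩
          rw [hvc _ (by omega)]; omega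
  intro x y hne hx0 hx2 hy0 hy2
  rcases Nat.lt_or_ge (x:ℕ) (y:ℕ) with h | h
  · exact part2 x y h hx0 hx2 hy0 hy2
  · have hlt : (y:ℕ) < (x:ℕ) := by
      rcases Nat.lt_or_ge (y:ℕ) (x:ℕ) with h' | h'
      · exact h'
      · exact absurd (Fin.ext (by omega)) hne
    rw [Set.pair_comm x y]
    exact part2 y x hlt hy0 hy2 hx0 hx2
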